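/- Let P be a bounded cochain complex all of whose terms are F-projective, and let S be an F-split acyclic complex. Then Hom_{K(A)}(P, S) = 0. -/

import Mathlib

open CategoryTheory Limits

/-- An object of `A` is `F`-projective if it is a direct summand of `L Y` for some `Y`. -/
def FProjective {A B : Type*} [Category A] [Category B] (L : B ⥤ A) (P : A) : Prop :=
  ∃ (Y : B) (i : P ⟶ L.obj Y) (r : L.obj Y ⟶ P), i ≫ r = 𝟙 P

/-- If `P` is a bounded cochain complex of `F`-projective objects and `S` is an
`F`-split acyclic complex (`F S` contractible), then every chain map `P ⟶ S` is
null-homotopic, i.e. `Hom_{K(A)}(P, S) = 0`. -/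
theorem stmt_14 {A B : Type*} [Category A] [Category B] [Abelian A] [Abelian B]
    (F : A ⥤ B) [F.Additive] [PreservesFiniteLimits F] [PreservesFiniteColimits F]
    (L : B ⥤ A) (adj : L ⊣ F)
    (P S : CochainComplex A ℤ)
    (hbdd : ∃ a b : ℤ, ∀ i : ℤ, (i < a ∨ b < i) → IsZero (P.X i))
    (hproj : ∀ i : ℤ, FProjective L (P.X i))
    (hS : Nonempty (Homotopy (𝟙 ((F.mapHomologicalComplex (ComplexShape.up ℤ)).obj S)) 0))
    (f : P ⟶ S) :
    Nonempty (Homotopy f 0) := by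
  classical
  obtain ⟨a, b, hab⟩ := hbdd
  obtain ⟨h⟩ := hS
  -- Key lifting lemma: a cocycle-valued map out of an F-projective object lifts
  have key : ∀ (n j m : ℤ), j + 1 = n → n + 1 = m →
      ∀ (g : P.X n ⟶ S.X n), g ≫ S.d n m = 0 →
      ∃ t : P.X n ⟶ S.X j, t ≫ S.d j n = g := by
    intro n j m hj hm g hg
    obtain ⟨Y, i, r, hir⟩ := hproj n
    have hcomm := h.comm n
    rw [dNext_eq h.hom (show (ComplexShape.up ℤ).Rel n m by simpa using hm),
        prevD_eq h.hom (show (ComplexShape.up ℤ).Rel j n by simpa using hj)] at hcomm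
    simp only [HomologicalComplex.id_f, HomologicalComplex.zero_f,
      Functor.mapHomologicalComplex_obj_d, Functor.mapHomologicalComplex_obj_X,
      add_zero] at hcomm
    obtain ⟨k, hk⟩ : ∃ k : F.obj (S.X n) ⟶ F.obj (S.X j), k = h.hom n j := ⟨_, rfl⟩
    obtain ⟨k2, hk2⟩ : ∃ k2 : F.obj (S.X m) ⟶ F.obj (S.X n), k2 = h.hom m n := ⟨_, rfl⟩
    replace hcomm : 𝟙 (F.obj (S.X n)) = F.map (S.d n m) ≫ k2 + k ≫ F.map (S.d j n) := by
      rw [hk, hk2]; exact hcomm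
    set u := (adj.homEquiv Y (S.X n)) (r ≫ g) with hu
    refine ⟨i ≫ (adj.homEquiv Y (S.X j)).symm (u ≫ k), ?_⟩
    have h3 : u ≫ F.map (S.d n m) = 0 := by
      rw [hu, ← Adjunction.homEquiv_naturality_right, Category.assoc, hg, comp_zero]
      simp [Adjunction.homEquiv_unit]
    have h1 : (u ≫ k) ≫ F.map (S.d j n) = u := by
      have h4 := congrArg (fun q => u ≫ q) hcomm
      simp only [Category.comp_id, Preadditive.comp_add, ← Category.assoc, h3,
        zero_comp, zero_add] at h4
      exact h4.symm
    rw [Category.assoc, ← Adjunction.homEquiv_naturality_right_symm, h1, hu,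
      Equiv.symm_apply_apply, ← Category.assoc, hir, Category.id_comp]
  -- The downward induction predicate
  let Q : ℤ → Prop := fun n => ∃ σ : ∀ i j : ℤ, P.X i ⟶ S.X j,
    (∀ i j, ¬ (ComplexShape.up ℤ).Rel j i → σ i j = 0) ∧
    (∀ i j, j + 1 = i → n ≤ i → f.f i = P.d i (i+1) ≫ σ (i+1) i + σ i j ≫ S.d j i)
  have base : Q (b+1) := by
    refine ⟨fun _ _ => 0, fun _ _ _ => rfl, ?_⟩
    intro i j hj hi
    exact (hab i (Or.inr (by omega))).eq_of_src _ _
  have step : ∀ n : ℤ, Q n → Q (n-1) := by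
    intro n hQ
    obtain ⟨σ, hz, hc⟩ := hQ
    set g : P.X (n-1) ⟶ S.X (n-1) := f.f (n-1) - P.d (n-1) n ≫ σ n (n-1) with hg
    have hgd : g ≫ S.d (n-1) n = 0 := by
      have hfc : f.f (n-1) ≫ S.d (n-1) n = P.d (n-1) n ≫ f.f n :=
        f.comm' (n-1) n (by simp)
      have hcn := hc n (n-1) (by omega) le_rfl
      have hσ : σ n (n-1) ≫ S.d (n-1) n = f.f n - P.d n (n+1) ≫ σ (n+1) n := by
        rw [hcn]; abel
      rw [hg, Preadditive.sub_comp, Category.assoc, hfc, hσ,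
        Preadditive.comp_sub]
      simp [HomologicalComplex.d_comp_d_assoc]
    choose! tfun htfun using fun (j : ℤ) (hj : j + 1 = n - 1) =>
      key (n-1) j n hj (by omega) g hgd
    refine ⟨fun i j =>
      if hij : i = n - 1 ∧ j + 1 = n - 1 then
        eqToHom (congrArg P.X hij.1) ≫ tfun j else σ i j, ?_, ?_⟩
    · intro i j hnr
      dsimp only
      rw [dif_neg (show ¬(i = n - 1 ∧ j + 1 = n - 1) by
        intro hh
        exact hnr (by simp only [ComplexShape.up_Rel]; omega))]
      exact hz i j hnr
    · intro i j hj hi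
      dsimp only
      by_cases hin : i = n - 1
      · subst hin
        rw [show n - 1 + 1 = n by ring,
          dif_neg (show ¬(n = n - 1 ∧ n = n - 1) by omega),
          dif_pos (show n - 1 = n - 1 ∧ j + 1 = n - 1 from ⟨rfl, hj⟩),
          Category.assoc, htfun j hj]
        simp only [eqToHom_refl, Category.id_comp]
        rw [hg]
        abel
      · rw [dif_neg (show ¬(i + 1 = n - 1 ∧ i + 1 = n - 1) by omega),
          dif_neg (show ¬(i = n - 1 ∧ j + 1 = n - 1) by omega)]
        exact hc i j hj (by omega)
  have main : ∀ k : ℕ, Q (b+1-k) := by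
    intro k
    induction k with
    | zero => simpa using base
    | succ k ih =>
      have e : b+1-((k:ℤ)+1) = (b+1-(k:ℤ)) - 1 := by ring
      rw [show ((k+1:ℕ):ℤ) = (k:ℤ)+1 by push_cast; ring, e]
      exact step _ ih
  obtain ⟨σ, hz, hc⟩ := main (b+1-a).toNat
  refine ⟨⟨σ, hz, ?_⟩⟩
  intro i
  rw [dNext_eq σ (show (ComplexShape.up ℤ).Rel i (i+1) by simp),
      prevD_eq σ (show (ComplexShape.up ℤ).Rel (i-1) i by simp)]
  by_cases hi : b+1-((b+1-a).toNat : ℤ) ≤ i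
  · simpa using hc i (i-1) (by omega) hi
  · exact (hab i (Or.inl (by omega))).eq_of_src _ _
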